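/- Let c ∈ ℝ and set D = 1 + c²/4. Define the real 3×3 matrices U = [[(1−c²/4)/D, 0, c/D],[0,1,0],[−c/D,0,(1−c²/4)/D]], A = [[1,0,−c],[0,1,0],[c,0,1−c²/2]], B = [[0,0,c],[0,0,0],[0,0,c²/2]]. Then Uᵀ·U = I₃ and det U = 1 (so U ∈ SO(3)); the product U·A is symmetric, with entries (UA)₁₁ = (1+3c²/4)/D, (UA)₃₃ = (1+c²/4+c⁴/8)/D, (UA)₂₂ = 1, (UA)₁₃ = (UA)₃₁ = −c³/(4D), and all other entries zero; and U·B has (UB)₁₃ = (c+c³/4)/D, (UB)₃₃ = (−c²/2−c⁴/8)/D, and all other entries zero. -/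

import Mathlib

open Matrix
set_option maxHeartbeats 1000000

/-- gauge-fixing rotation for the third family of semiflat
deformations (`ỹ₂ = y₂ + c r`): with `D = 1 + c²/4`, `U ∈ SO(3)`, `U·A` is the
stated symmetric matrix and `U·B` the stated matrix. -/
theorem stmt_17 (c D : ℝ) (hD : D = 1 + c ^ 2 / 4)
    (U A B : Matrix (Fin 3) (Fin 3) ℝ)
    (hU : U = !![(1 - c ^ 2 / 4) / D, 0, c / D;
                 0, 1, 0;
                 -c / D, 0, (1 - c ^ 2 / 4) / D])
    (hA : A = !![1, 0, -c; 0, 1, 0; c, 0, 1 - c ^ 2 / 2])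
    (hB : B = !![0, 0, c; 0, 0, 0; 0, 0, c ^ 2 / 2]) :
    Uᵀ * U = 1 ∧ U.det = 1 ∧
    U * A = !![(1 + 3 * c ^ 2 / 4) / D, 0, -c ^ 3 / (4 * D);
               0, 1, 0;
               -c ^ 3 / (4 * D), 0, (1 + c ^ 2 / 4 + c ^ 4 / 8) / D] ∧
    (U * A)ᵀ = U * A ∧
    U * B = !![0, 0, (c + c ^ 3 / 4) / D;
               0, 0, 0;
               0, 0, (-c ^ 2 / 2 - c ^ 4 / 8) / D] := by
  have hD0 : D ≠ 0 := by rw [hD]; positivity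
  subst hU hA hB
  have hUA : (!![(1 - c ^ 2 / 4) / D, 0, c / D;
                 0, 1, 0;
                 -c / D, 0, (1 - c ^ 2 / 4) / D]) *
      (!![1, 0, -c; 0, 1, 0; c, 0, 1 - c ^ 2 / 2]) =
      !![(1 + 3 * c ^ 2 / 4) / D, 0, -c ^ 3 / (4 * D);
               0, 1, 0;
               -c ^ 3 / (4 * D), 0, (1 + c ^ 2 / 4 + c ^ 4 / 8) / D] := by
    ext i j
    subst hD
    fin_cases i <;> fin_cases j <;>
      simp [Matrix.mul_apply, Fin.sum_univ_succ] <;>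
      field_simp <;> ring
  refine ⟨?_, ?_, hUA, ?_, ?_⟩
  · ext i j
    subst hD
    fin_cases i <;> fin_cases j <;>
      simp [Matrix.mul_apply, Fin.sum_univ_succ, Matrix.one_apply] <;>
      field_simp <;> ring
  · rw [Matrix.det_fin_three]
    subst hD
    simp [Matrix.vecHead, Matrix.vecTail]
    field_simp
    ring
  · ext i j
    subst hD
    fin_cases i <;> fin_cases j <;>
      simp [Matrix.mul_apply, Fin.sum_univ_succ, Matrix.vecHead, Matrix.vecTail] <;>
      field_simp <;> ring
  · ext i j
    subst hD
    fin_cases i <;> fin_cases j <;>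
      simp [Matrix.mul_apply, Fin.sum_univ_succ, Matrix.vecHead, Matrix.vecTail] <;>
      field_simp <;> ring
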